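/- If g is a palindrome (or more generally an {a,c}-palindrome) in G = A * B, then d_{m,n}(g) = d_{n,m}(g) for all m ≠ n, hence Δ₂(g) = 0. -/

import Mathlib

open Monoid Monoid.CoprodI

attribute [local instance] Classical.propDecidable

/-- The list of syllables of the reduced word representing `g`. -/
noncomputable def syllables {ι : Type*} {M : ι → Type*} [∀ i, Group (M i)]
    (g : CoprodI M) : List (Σ i, M i) :=
  letI := Classical.decEq ι
  letI : ∀ i, DecidableEq (M i) := fun _ => Classical.decEq _
  (Word.equiv g).toList

/-- `g` is a palindrome iff its reduced word reads the same backwards. -/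
noncomputable def IsPalindrome {ι : Type*} {M : ι → Type*} [∀ i, Group (M i)]
    (g : CoprodI M) : Prop :=
  (syllables g).reverse = syllables g

/-- `segCount2 sa sc m n g` is the number of `a`-segments of type `(m,n)` in the
reduced form of `g`: triples `p < r < q` where `p, q` are consecutive occurrences
of the syllable `sa`, `r` is the unique occurrence of the syllable `sc` strictly
between them, with `m` syllables before `sc` and `n` syllables after it. -/
noncomputable def segCount2 {ι : Type*} {M : ι → Type*} [∀ i, Group (M i)]
    (sa sc : Σ i, M i) (m n : ℕ) (g : CoprodI M) : ℕ :=
  (((Finset.range (syllables g).length ×ˢ Finset.range (syllables g).length) ×ˢ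
      Finset.range (syllables g).length).filter
    (fun t => t.1.1 < t.1.2 ∧ t.1.2 < t.2 ∧
      (syllables g)[t.1.1]? = some sa ∧ (syllables g)[t.2]? = some sa ∧
      (syllables g)[t.1.2]? = some sc ∧
      (∀ u ∈ Finset.Ioo t.1.1 t.2, (syllables g)[u]? ≠ some sa) ∧
      (∀ u ∈ Finset.Ioo t.1.1 t.2, u ≠ t.1.2 → (syllables g)[u]? ≠ some sc) ∧
      t.1.2 - t.1.1 = m + 1 ∧ t.2 - t.1.2 = n + 1)).card


/-- The quasi-homomorphism `Δ₂(g) = Σ_{m<n} t_{m,n}(g)` (a finite sum), where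
`t_{m,n} = d_{m,n} - d_{n,m}`. -/
noncomputable def Delta2 {ι : Type*} {M : ι → Type*} [∀ i, Group (M i)]
    (sa sc : Σ i, M i) (g : CoprodI M) : ℤ :=
  ∑ᶠ p : ℕ × ℕ, if p.1 < p.2 then
    (segCount2 sa sc p.1 p.2 g : ℤ) - segCount2 sa sc p.2 p.1 g else 0

/-- A reduced word is a `C`-palindrome if the occurrences of syllables from `C`
are placed symmetrically, with equal values at mirrored positions. -/
noncomputable def IsCPalindrome {ι : Type*} {M : ι → Type*} [∀ i, Group (M i)]
    (C : Set (Σ i, M i)) (g : CoprodI M) : Prop :=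
  ∀ (n : ℕ), ∀ x ∈ C, (syllables g)[n]? = some x ↔ (syllables g).reverse[n]? = some x

/-- If `g` is an `{a,c}`-palindrome (in particular a palindrome) then
`d_{m,n}(g) = d_{n,m}(g)` for all `m ≠ n`, hence `Δ₂(g) = 0`. -/
theorem Delta2_eq_zero_of_CPalindrome {M : Bool → Type*} [∀ b, Group (M b)]
    [Nontrivial (M true)] [Nontrivial (M false)]
    (a c : M true) (ha : a ≠ 1) (hc : c ≠ 1) (hac : a ≠ c) (g : CoprodI M)
    (hg : IsCPalindrome {⟨true, a⟩, ⟨true, c⟩} g) :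
    (∀ m n : ℕ, m ≠ n →
      segCount2 ⟨true, a⟩ ⟨true, c⟩ m n g = segCount2 ⟨true, a⟩ ⟨true, c⟩ n m g) ∧
    Delta2 ⟨true, a⟩ ⟨true, c⟩ g = 0 := by
  have key : ∀ m n : ℕ,
      segCount2 ⟨true, a⟩ ⟨true, c⟩ m n g = segCount2 ⟨true, a⟩ ⟨true, c⟩ n m g := by
    set sa : Σ b, M b := ⟨true, a⟩
    set sc : Σ b, M b := ⟨true, c⟩
    set l := syllables g with hl
    set L := l.length with hL
    -- mirror symmetry of positions of sa and sc
    have hsym : ∀ x ∈ ({sa, sc} : Set (Σ b, M b)), ∀ k, k < L →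
        (l[k]? = some x ↔ l[L - 1 - k]? = some x) := by
      intro x hx k hk
      have := hg k x hx
      rwa [List.getElem?_reverse hk] at this
    have hsa : sa ∈ ({sa, sc} : Set (Σ b, M b)) := Or.inl rfl
    have hsc : sc ∈ ({sa, sc} : Set (Σ b, M b)) := Or.inr rfl
    intro m n
    have hLen : (syllables g).length = L := rfl
    unfold segCount2
    apply Finset.card_nbij' (fun t => ((L - 1 - t.2, L - 1 - t.1.2), L - 1 - t.1.1))
      (fun t => ((L - 1 - t.2, L - 1 - t.1.2), L - 1 - t.1.1))
    · intro t ht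
      obtain ⟨⟨p, r⟩, q⟩ := t
      simp only [Finset.mem_coe, Finset.mem_filter, Finset.mem_product, Finset.mem_range] at ht ⊢
      obtain ⟨⟨⟨hp, hr⟩, hq⟩, hpr, hrq, hpa, hqa, hrc, hnoa, hnoc, hm, hn⟩ := ht
      refine ⟨⟨⟨by omega, by omega⟩, by omega⟩, by omega, by omega, ?_, ?_, ?_, ?_, ?_,
        by omega, by omega⟩
      · exact (hsym sa hsa q hq).mp hqa
      · exact ((hsym sa hsa p hp).mp hpa : _)
      · exact (hsym sc hsc r hr).mp hrc
      · intro u hu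
        simp only [Finset.mem_Ioo] at hu
        have huL : u < L := by omega
        have : L - 1 - u ∈ Finset.Ioo p q := by simp only [Finset.mem_Ioo]; omega
        intro hcon
        have : l[L - 1 - u]? = some sa := by
          have := (hsym sa hsa u huL).mp hcon
          rwa [show L - 1 - u = L - 1 - u from rfl] at this
        exact hnoa _ (by simp only [Finset.mem_Ioo]; omega) this
      · intro u hu hur
        simp only [Finset.mem_Ioo] at hu
        have huL : u < L := by omega
        intro hcon
        have hcon' : l[L - 1 - u]? = some sc := (hsym sc hsc u huL).mp hcon
        exact hnoc _ (by simp only [Finset.mem_Ioo]; omega) (by omega) hcon'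
    · intro t ht
      obtain ⟨⟨p, r⟩, q⟩ := t
      simp only [Finset.mem_coe, Finset.mem_filter, Finset.mem_product, Finset.mem_range] at ht ⊢
      obtain ⟨⟨⟨hp, hr⟩, hq⟩, hpr, hrq, hpa, hqa, hrc, hnoa, hnoc, hm, hn⟩ := ht
      refine ⟨⟨⟨by omega, by omega⟩, by omega⟩, by omega, by omega, ?_, ?_, ?_, ?_, ?_,
        by omega, by omega⟩
      · exact (hsym sa hsa q hq).mp hqa
      · exact (hsym sa hsa p hp).mp hpa
      · exact (hsym sc hsc r hr).mp hrc
      · intro u hu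
        simp only [Finset.mem_Ioo] at hu
        have huL : u < L := by omega
        intro hcon
        have hcon' : l[L - 1 - u]? = some sa := (hsym sa hsa u huL).mp hcon
        exact hnoa _ (by simp only [Finset.mem_Ioo]; omega) hcon'
      · intro u hu hur
        simp only [Finset.mem_Ioo] at hu
        have huL : u < L := by omega
        intro hcon
        have hcon' : l[L - 1 - u]? = some sc := (hsym sc hsc u huL).mp hcon
        exact hnoc _ (by simp only [Finset.mem_Ioo]; omega) (by omega) hcon'
    · intro t ht
      obtain ⟨⟨p, r⟩, q⟩ := t
      simp only [Finset.mem_coe, Finset.mem_filter, Finset.mem_product, Finset.mem_range] at ht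
      obtain ⟨⟨⟨hp, hr⟩, hq⟩, hpr, hrq, -⟩ := ht
      simp only [Prod.mk.injEq]
      omega
    · intro t ht
      obtain ⟨⟨p, r⟩, q⟩ := t
      simp only [Finset.mem_coe, Finset.mem_filter, Finset.mem_product, Finset.mem_range] at ht
      obtain ⟨⟨⟨hp, hr⟩, hq⟩, hpr, hrq, -⟩ := ht
      simp only [Prod.mk.injEq]
      omega
  refine ⟨fun m n _ => key m n, ?_⟩
  unfold Delta2
  have hz : ∀ p : ℕ × ℕ, (if p.1 < p.2 then
      (segCount2 ⟨true, a⟩ ⟨true, c⟩ p.1 p.2 g : ℤ) -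
        segCount2 ⟨true, a⟩ ⟨true, c⟩ p.2 p.1 g else 0) = 0 := by
    intro p
    split
    · rw [key p.1 p.2]; ring
    · rfl
  rw [finsum_congr hz, finsum_zero]
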